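/- For every n ≥ 2, every q ∈ ℂ with q ≠ 0, and all indices 1 ≤ j < i ≤ n − 1, the operators on V (the span of basis vectors indexed by involutions in ISₙ) satisfy T_i P_j = P_j T_i in End_ℂ(V). -/

import Mathlib

open Equiv

/-- The symmetric inverse semigroup `ISₙ`: partial injective maps of `{0, …, n−1}`
(modelled as partial equivalences `Fin n ≃. Fin n`), under composition of partial
maps: `(x * y)(a) = x(y(a))`. -/
abbrev ISn (n : ℕ) : Type := PEquiv (Fin n) (Fin n)

noncomputable instance ISnMonoid (n : ℕ) : Monoid (ISn n) where
  one := PEquiv.refl (Fin n)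
  mul x y := y.trans x
  mul_assoc x y z := (PEquiv.trans_assoc z y x).symm
  one_mul x := PEquiv.trans_refl x
  mul_one x := PEquiv.refl_trans x

@[simp] theorem ISn.mul_def {n : ℕ} (x y : ISn n) : x * y = y.trans x := rfl
@[simp] theorem ISn.one_def {n : ℕ} : (1 : ISn n) = PEquiv.refl (Fin n) := rfl

/-- Involutions in `ISₙ`: elements mapping their domain bijectively to itself with
`w(w(a)) = a` for all `a` in the domain; equivalently, `w.symm = w`. -/
abbrev ISInv (n : ℕ) : Type := {w : ISn n // w.symm = w}

/-- `V`: the complex vector space with basis `{I_w : w an involution in ISₙ}`. -/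
abbrev VIS (n : ℕ) : Type := ISInv n →₀ ℂ

/-- Conjugation `x w x⁻¹` of an involution `w ∈ ISₙ` by an element `x ∈ ISₙ`
(as a partial map, `a ↦ x(w(x⁻¹(a)))`; when `dom(w) ⊆ dom(x)` this is the involution
with domain `x(dom(w))` sending `x(a) ↦ x(w(a))` for `a ∈ dom(w)`). -/
def conjIS {n : ℕ} (x : ISn n) (w : ISInv n) : ISInv n :=
  ⟨(x.symm.trans w.1).trans x, by
    rw [PEquiv.symm_trans_rev, PEquiv.symm_trans_rev, PEquiv.symm_symm, w.2,
      PEquiv.trans_assoc]⟩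

/-- Conjugation `π w π⁻¹` of an involution `w ∈ ISₙ` by a permutation `π ∈ Sₙ`:
the involution with domain `π(dom(w))` sending `π(a) ↦ π(w(a))` for `a ∈ dom(w)`. -/
def conjPermIS {n : ℕ} (π : Equiv.Perm (Fin n)) (w : ISInv n) : ISInv n :=
  conjIS π.toPEquiv w

/-- The operator `T_i` on `V`.  Indices are 0-based: the parameter `i` (with
`i + 1 < n`) corresponds to the pair of points `i, i+1` of `{0, …, n−1}` (that is,
to the 1-based index `i+1` of the paper), and `s_i` is the transposition swapping
them.  On a basis vector `I_w`:
if `i, i+1 ∈ dom(w)` then `T_i I_w` is `q I_w` if `i, i+1 ∉ supp(w)`; `−I_w` if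
`i, i+1 ∈ supp(w)`; `I_{s_i w s_i}` if `i ∈ supp(w)`, `i+1 ∉ supp(w)`;
`q I_{s_i w s_i} + (q−1) I_w` if `i ∉ supp(w)`, `i+1 ∈ supp(w)`.
If `i, i+1 ∉ dom(w)` then `T_i I_w = q I_w`.  If `i ∈ dom(w)`, `i+1 ∉ dom(w)` then
`T_i I_w = I_{s_i w s_i}`.  If `i ∉ dom(w)`, `i+1 ∈ dom(w)` then
`T_i I_w = q I_{s_i w s_i} + (q−1) I_w`. -/
noncomputable def TIS (n : ℕ) (q : ℂ) (i : ℕ) (hi : i + 1 < n) : VIS n →ₗ[ℂ] VIS n :=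
  Finsupp.lift (VIS n) ℂ (ISInv n) (fun w =>
    letI a : Fin n := ⟨i, Nat.lt_of_succ_lt hi⟩
    letI b : Fin n := ⟨i + 1, hi⟩
    letI s : Equiv.Perm (Fin n) := Equiv.swap a b
    if (w.1 a).isSome then
      if (w.1 b).isSome then
        -- both `i` and `i+1` lie in `dom(w)`
        if w.1 a = some a then
          if w.1 b = some b then q • Finsupp.single w (1 : ℂ)
          else q • Finsupp.single (conjPermIS s w) (1 : ℂ) +
            (q - 1) • Finsupp.single w (1 : ℂ)
        else
          if w.1 b = some b then Finsupp.single (conjPermIS s w) (1 : ℂ)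
          else - Finsupp.single w (1 : ℂ)
      else Finsupp.single (conjPermIS s w) (1 : ℂ)
    else
      if (w.1 b).isSome then
        q • Finsupp.single (conjPermIS s w) (1 : ℂ) + (q - 1) • Finsupp.single w (1 : ℂ)
      else q • Finsupp.single w (1 : ℂ))

/-- The operator `P_i` on `V`.  Indices are 0-based: the parameter `i` (with `i < n`)
corresponds to the 1-based index `i+1` of the paper, so that the paper's condition
`dom(w) ⊆ {i+1, …, n}` becomes: every `a ∈ dom(w)` satisfies `i < a`.
On a basis vector: `P_i I_w = I_w` if `dom(w) ⊆ {i+1, …, n}`, and `P_i I_w = 0`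
otherwise. -/
noncomputable def PIS (n : ℕ) (i : ℕ) : VIS n →ₗ[ℂ] VIS n :=
  Finsupp.lift (VIS n) ℂ (ISInv n) (fun w =>
    if ∀ a : Fin n, (w.1 a).isSome → i < (a : ℕ) then Finsupp.single w (1 : ℂ) else 0)

/-- The linear map `C_π : V → V` with `C_π(I_w) = I_{π w π⁻¹}`. -/
noncomputable def CIS (n : ℕ) (π : Equiv.Perm (Fin n)) : VIS n →ₗ[ℂ] VIS n :=
  Finsupp.lift (VIS n) ℂ (ISInv n) (fun w => Finsupp.single (conjPermIS π w) (1 : ℂ))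


lemma conjPermIS_apply_isSome {n : ℕ} (π : Equiv.Perm (Fin n)) (w : ISInv n) (a : Fin n) :
    ((conjPermIS π w).1 a).isSome = (w.1 (π.symm a)).isSome := by
  show ((((π.toPEquiv).symm.trans w.1).trans π.toPEquiv) a).isSome = _
  rw [← Equiv.toPEquiv_symm]
  cases h : w.1 (π.symm a) <;> simp [PEquiv.trans, Equiv.toPEquiv_apply, h]

lemma PIS_single {n : ℕ} (j : ℕ) (w : ISInv n) (c : ℂ) :
    PIS n j (Finsupp.single w c) =
      if ∀ a : Fin n, (w.1 a).isSome → j < (a : ℕ) then Finsupp.single w c else 0 := by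
  simp only [PIS, Finsupp.lift_apply]
  rw [Finsupp.sum_single_index (by simp)]
  split_ifs <;> simp

lemma cond_conj_iff {n : ℕ} (i j : ℕ) (hi : i + 1 < n) (hij : j < i) (w : ISInv n) :
    (∀ a : Fin n,
        ((conjPermIS (Equiv.swap (⟨i, Nat.lt_of_succ_lt hi⟩ : Fin n) ⟨i + 1, hi⟩) w).1 a).isSome →
          j < (a : ℕ)) ↔
      (∀ a : Fin n, (w.1 a).isSome → j < (a : ℕ)) := by
  set x : Fin n := ⟨i, Nat.lt_of_succ_lt hi⟩
  set y : Fin n := ⟨i + 1, hi⟩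
  have hsymm : (Equiv.swap x y).symm = Equiv.swap x y := Equiv.symm_swap x y
  constructor
  · intro h a ha
    have : ((conjPermIS (Equiv.swap x y) w).1 (Equiv.swap x y a)).isSome := by
      rw [conjPermIS_apply_isSome, hsymm, Equiv.swap_apply_self]
      exact ha
    have hsa := h _ this
    by_cases hax : a = x
    · subst hax; exact hij
    by_cases hay : a = y
    · subst hay; exact Nat.lt_succ_of_lt hij
    · rwa [Equiv.swap_apply_of_ne_of_ne hax hay] at hsa
  · intro h a ha
    rw [conjPermIS_apply_isSome, hsymm] at ha
    have hsa := h _ ha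
    by_cases hax : a = x
    · subst hax; exact hij
    by_cases hay : a = y
    · subst hay; exact Nat.lt_succ_of_lt hij
    · rwa [Equiv.swap_apply_of_ne_of_ne hax hay] at hsa

/-- `T_i P_j = P_j T_i` for `j < i` (0-based indices: the paper's 1-based condition
`1 ≤ j < i ≤ n − 1` reads `j < i`, `i + 1 < n`). -/
theorem TIS_PIS_low (n : ℕ) (hn : 2 ≤ n) (q : ℂ) (hq : q ≠ 0) (i j : ℕ)
    (hi : i + 1 < n) (hij : j < i) :
    (TIS n q i hi : Module.End ℂ (VIS n)) * PIS n j =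
      (PIS n j : Module.End ℂ (VIS n)) * TIS n q i hi := by
  apply Finsupp.lhom_ext'
  intro w
  apply LinearMap.ext_ring
  set x : Fin n := ⟨i, Nat.lt_of_succ_lt hi⟩
  set y : Fin n := ⟨i + 1, hi⟩
  set s : Equiv.Perm (Fin n) := Equiv.swap x y
  have hcond := cond_conj_iff i j hi hij w
  have hT : TIS n q i hi (Finsupp.single w (1 : ℂ)) =
      (if (w.1 x).isSome then
        if (w.1 y).isSome then
          if w.1 x = some x then
            if w.1 y = some y then q • Finsupp.single w (1 : ℂ)
            else q • Finsupp.single (conjPermIS s w) (1 : ℂ) +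
              (q - 1) • Finsupp.single w (1 : ℂ)
          else
            if w.1 y = some y then Finsupp.single (conjPermIS s w) (1 : ℂ)
            else - Finsupp.single w (1 : ℂ)
        else Finsupp.single (conjPermIS s w) (1 : ℂ)
      else
        if (w.1 y).isSome then
          q • Finsupp.single (conjPermIS s w) (1 : ℂ) + (q - 1) • Finsupp.single w (1 : ℂ)
        else q • Finsupp.single w (1 : ℂ)) := by
    simp only [TIS, Finsupp.lift_apply]
    rw [Finsupp.sum_single_index (by simp), one_smul]
  simp only [LinearMap.coe_comp, Function.comp_apply, Finsupp.lsingle_apply,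
    Module.End.mul_apply]
  by_cases hc : ∀ a : Fin n, (w.1 a).isSome → j < (a : ℕ)
  · rw [PIS_single, if_pos hc, hT]
    split_ifs <;>
      simp [s, x, y, map_add, map_smul, map_neg, PIS_single, if_pos hc, if_pos (hcond.mpr hc)]
  · rw [PIS_single, if_neg hc, hT, map_zero]
    split_ifs <;>
      simp [s, x, y, map_add, map_smul, map_neg, PIS_single, if_neg hc,
        if_neg (fun h => hc (hcond.mp h))]
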